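/- For every natural number n ≥ 1 and every λ ∈ ℝ with λ ≠ 0, there exist finite sets X, Y ⊆ ℝ with 0 ∉ Y and a set G ⊆ X × Y with |G| = n², such that |X +_G Y| ≤ 2n, |X +_G λY| ≤ 2n, and |X /_G Y| ≤ 2n. In particular, max{|X +_G Y|, |X +_G λY|, |X /_G Y|} ≤ 2 · |G|^(1/2). -/

import Mathlib

open Finset

private lemma two_pow_inj {u u' : ℕ} (h : (2:ℝ)^u = 2^u') : u = u' :=
  pow_right_injective₀ (by norm_num) (by norm_num) h

private lemma ratio_aux (n : ℕ) (hn : 1 ≤ n) (lam : ℝ)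
    (a b : ℕ → ℝ) (w : ℕ → ℕ)
    (hb0 : ∀ v ∈ Icc 1 n, b v ≠ 0)
    (hbinj : ∀ v ∈ Icc 1 n, ∀ v' ∈ Icc 1 n, b v = b v' → v = v')
    (hab : ∀ v ∈ Icc 1 n, a v + b v = 1)
    (hl : ∀ v ∈ Icc 1 n, a v + lam * b v = 2 ^ (w v))
    (hwn : ∀ v ∈ Icc 1 n, w v ≤ n) :
    ∃ (X Y : Finset ℝ) (G : Finset (ℝ × ℝ)), G ⊆ X ×ˢ Y ∧
      (0 : ℝ) ∉ Y ∧
      G.card = n ^ 2 ∧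
      (G.image (fun p => p.1 + p.2)).card ≤ 2 * n ∧
      (G.image (fun p => p.1 + lam * p.2)).card ≤ 2 * n ∧
      (G.image (fun p => p.1 / p.2)).card ≤ 2 * n ∧
      ((max (max (G.image (fun p => p.1 + p.2)).card
                 (G.image (fun p => p.1 + lam * p.2)).card)
            (G.image (fun p => p.1 / p.2)).card : ℕ) : ℝ) ≤
        2 * (G.card : ℝ) ^ ((1 : ℝ) / 2) := by
  classical
  set S : Finset (ℕ × ℕ) := Icc 1 n ×ˢ Icc 1 n with hS
  set φ : ℕ × ℕ → ℝ × ℝ := fun p => ((2:ℝ)^p.1 * a p.2, (2:ℝ)^p.1 * b p.2) with hφ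
  have hsub : S.image φ ⊆ (S.image (fun p => (2:ℝ)^p.1 * a p.2)) ×ˢ (S.image (fun p => (2:ℝ)^p.1 * b p.2)) := by
    intro z hz
    simp only [mem_image] at hz
    obtain ⟨p, hp, rfl⟩ := hz
    simp only [mem_product, mem_image]
    exact ⟨⟨p, hp, rfl⟩, ⟨p, hp, rfl⟩⟩
  have hY : (0:ℝ) ∉ S.image (fun p => (2:ℝ)^p.1 * b p.2) := by
    intro h0
    simp only [mem_image] at h0
    obtain ⟨p, hp, h0⟩ := h0
    simp only [hS, mem_product] at hp
    refine hb0 p.2 hp.2 ?_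
    rcases mul_eq_zero.mp h0 with h | h
    · exact absurd h (by positivity)
    · exact h
  have hcard : (S.image φ).card = n ^ 2 := by
    rw [Finset.card_image_of_injOn, hS, Finset.card_product, Nat.card_Icc]
    · simp [sq]
    · intro p hp q hq hpq
      replace hp : p.1 ∈ Icc 1 n ∧ p.2 ∈ Icc 1 n := Finset.mem_product.mp (Finset.mem_coe.mp hp)
      replace hq : q.1 ∈ Icc 1 n ∧ q.2 ∈ Icc 1 n := Finset.mem_product.mp (Finset.mem_coe.mp hq)
      have hsum : (2:ℝ)^p.1 * a p.2 + (2:ℝ)^p.1 * b p.2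
          = (2:ℝ)^q.1 * a q.2 + (2:ℝ)^q.1 * b q.2 := by
        rw [show ((2:ℝ)^p.1 * a p.2) = (φ p).1 from rfl, show ((2:ℝ)^p.1 * b p.2) = (φ p).2 from rfl, hpq]
      rw [← mul_add, ← mul_add, hab _ hp.2, hab _ hq.2, mul_one, mul_one] at hsum
      have h1 : p.1 = q.1 := two_pow_inj hsum
      have hsnd : (2:ℝ)^p.1 * b p.2 = (2:ℝ)^q.1 * b q.2 := by
        rw [show ((2:ℝ)^p.1 * b p.2) = (φ p).2 from rfl, hpq]
      rw [← h1] at hsnd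
      have h2pos : (2:ℝ)^p.1 ≠ 0 := by positivity
      have h2 : p.2 = q.2 := hbinj _ hp.2 _ hq.2 (mul_left_cancel₀ h2pos hsnd)
      exact Prod.ext h1 h2
  have hA : ((S.image φ).image (fun p => p.1 + p.2)).card ≤ 2 * n := by
    calc ((S.image φ).image (fun p => p.1 + p.2)).card
        ≤ ((Icc 1 n).image (fun u => (2:ℝ)^u)).card := by
          apply card_le_card
          intro z hz
          simp only [mem_image, Finset.image_image] at hz ⊢
          obtain ⟨p, hp, rfl⟩ := hz
          simp only [hS, mem_product] at hp
          refine ⟨p.1, hp.1, ?_⟩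
          simp only [φ, Function.comp]
          rw [← mul_add, hab _ hp.2, mul_one]
      _ ≤ (Icc 1 n).card := card_image_le
      _ ≤ 2 * n := by rw [Nat.card_Icc]; omega
  have hB : ((S.image φ).image (fun p => p.1 + lam * p.2)).card ≤ 2 * n := by
    calc ((S.image φ).image (fun p => p.1 + lam * p.2)).card
        ≤ ((Icc 1 (2*n)).image (fun u => (2:ℝ)^u)).card := by
          apply card_le_card
          intro z hz
          simp only [mem_image, Finset.image_image] at hz ⊢
          obtain ⟨p, hp, rfl⟩ := hz
          simp only [hS, mem_product, mem_Icc] at hp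
          refine ⟨p.1 + w p.2, mem_Icc.mpr ⟨by omega, by have := hwn p.2 (by simp [mem_Icc]; omega); omega⟩, ?_⟩
          simp only [φ, Function.comp]
          rw [pow_add]
          rw [mul_left_comm, ← mul_add, hl p.2 (by simp [mem_Icc]; omega)]
      _ ≤ (Icc 1 (2*n)).card := card_image_le
      _ ≤ 2 * n := by rw [Nat.card_Icc]; omega
  have hC : ((S.image φ).image (fun p => p.1 / p.2)).card ≤ 2 * n := by
    calc ((S.image φ).image (fun p => p.1 / p.2)).card
        ≤ ((Icc 1 n).image (fun v => a v / b v)).card := by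
          apply card_le_card
          intro z hz
          simp only [mem_image, Finset.image_image] at hz ⊢
          obtain ⟨p, hp, rfl⟩ := hz
          simp only [hS, mem_product] at hp
          refine ⟨p.2, hp.2, ?_⟩
          simp only [φ, Function.comp]
          rw [mul_div_mul_left]
          positivity
      _ ≤ (Icc 1 n).card := card_image_le
      _ ≤ 2 * n := by rw [Nat.card_Icc]; omega
  refine ⟨_, _, _, hsub, hY, hcard, hA, hB, hC, ?_⟩
  rw [hcard]
  have hrn : ((n ^ 2 : ℕ) : ℝ) ^ ((1:ℝ)/2) = n := by
    rw [show ((n ^ 2 : ℕ) : ℝ) = (n:ℝ) ^ (2:ℕ) by push_cast; ring,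
      ← Real.rpow_natCast (n:ℝ) 2, ← Real.rpow_mul (by positivity)]
    norm_num
  rw [hrn]
  have : max (max ((S.image φ).image (fun p => p.1 + p.2)).card
      ((S.image φ).image (fun p => p.1 + lam * p.2)).card)
      ((S.image φ).image (fun p => p.1 / p.2)).card ≤ 2 * n := by
    simp only [max_le_iff]
    exact ⟨⟨hA, hB⟩, hC⟩
  calc ((max (max ((S.image φ).image (fun p => p.1 + p.2)).card
      ((S.image φ).image (fun p => p.1 + lam * p.2)).card)
      ((S.image φ).image (fun p => p.1 / p.2)).card : ℕ) : ℝ) ≤ ((2 * n : ℕ) : ℝ) := by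
        exact_mod_cast this
    _ = 2 * (n:ℝ) := by push_cast; ring

/-- Products cannot be replaced with ratios: for every `n ≥ 1` and `λ ≠ 0`,
there exist `X, Y ⊆ ℝ` with `0 ∉ Y` and `G ⊆ X × Y` with `|G| = n²` and
`|X +_G Y|, |X +_G λY|, |X /_G Y| ≤ 2n`; in particular
`max {|X +_G Y|, |X +_G λY|, |X /_G Y|} ≤ 2 |G|^(1/2)`. -/
theorem ratio_construction (n : ℕ) (hn : 1 ≤ n) (lam : ℝ) (hlam : lam ≠ 0) :
    ∃ (X Y : Finset ℝ) (G : Finset (ℝ × ℝ)), G ⊆ X ×ˢ Y ∧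
      (0 : ℝ) ∉ Y ∧
      G.card = n ^ 2 ∧
      (G.image (fun p => p.1 + p.2)).card ≤ 2 * n ∧
      (G.image (fun p => p.1 + lam * p.2)).card ≤ 2 * n ∧
      (G.image (fun p => p.1 / p.2)).card ≤ 2 * n ∧
      ((max (max (G.image (fun p => p.1 + p.2)).card
                 (G.image (fun p => p.1 + lam * p.2)).card)
            (G.image (fun p => p.1 / p.2)).card : ℕ) : ℝ) ≤
        2 * (G.card : ℝ) ^ ((1 : ℝ) / 2) := by
  by_cases hl1 : lam = 1
  · subst hl1
    refine ratio_aux n hn 1 (fun v => 1 - ((2:ℝ)^v)⁻¹) (fun v => ((2:ℝ)^v)⁻¹) (fun _ => 0)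
      (fun v _ => by positivity) ?_ (fun v _ => by ring) (fun v _ => by norm_num) (fun v _ => n.zero_le)
    intro v _ v' _ h
    exact two_pow_inj (by rw [inv_inj] at h; exact h)
  · have hne : lam - 1 ≠ 0 := sub_ne_zero.mpr hl1
    refine ratio_aux n hn lam (fun v => (lam - 2^v) / (lam - 1))
      (fun v => ((2:ℝ)^v - 1) / (lam - 1)) (fun v => v) ?_ ?_ ?_ ?_ (fun v hv => (mem_Icc.mp hv).2)
    · intro v hv
      have h1 : (1:ℝ) < 2^v := by
        have := (mem_Icc.mp hv).1
        calc (1:ℝ) < 2^1 := by norm_num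
          _ ≤ 2^v := by apply pow_le_pow_right₀ (by norm_num) (by omega)
      have : (2:ℝ)^v - 1 ≠ 0 := by linarith
      exact div_ne_zero this hne
    · intro v hv v' hv' h
      rw [div_eq_div_iff hne hne] at h
      have : (2:ℝ)^v = 2^v' := by
        have := mul_right_cancel₀ hne h
        linarith
      exact two_pow_inj this
    · intro v _; field_simp; ring
    · intro v _; field_simp; ring
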